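/- arXiv:math/0601206 — 5 statements merged into one kernel-verified Lean document; each statement's English description precedes it below -/
import Mathlib

section
/- Let n ≥ 1 and let m_0, m_1, …, m_n be positive real numbers satisfying m_i ≥ √(m_{i-1} · m_{i+1}) for all i = 1, …, n−1. Then every admissible collision sequence has length at most n(n+1)/2; that is, if v^(0), v^(1), …, v^(N) is a sequence of vectors in ℝ^{n+1} such that for each t < N there is an index i (1 ≤ i ≤ n) with v^(t)_{i-1} > v^(t)_i and v^(t+1) is obtained from v^(t) by the elastic collision between balls i−1 and i, then N ≤ n(n+1)/2. -/
/-- The elastic collision between balls `i - 1` and `i` (for `1 ≤ i ≤ n`):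
the velocities `v (i-1)`, `v i` are replaced according to conservation of
momentum and energy, all other velocities are unchanged. -/
noncomputable def collide {n : ℕ} (m : Fin (n + 1) → ℝ) (i : Fin (n + 1))
    (v : Fin (n + 1) → ℝ) : Fin (n + 1) → ℝ := fun j =>
  if j = i - 1 then
    ((m (i - 1) - m i) * v (i - 1) + 2 * m i * v i) / (m (i - 1) + m i)
  else if j = i then
    (2 * m (i - 1) * v (i - 1) + (m i - m (i - 1)) * v i) / (m (i - 1) + m i)
  else v j

open Finset
open Fin.NatCast

/- ============ Fin bookkeeping ============ -/

lemma fin_one_val (n : ℕ) (hn : 1 ≤ n) : ((1 : Fin (n+1)) : ℕ) = 1 := by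
  rw [Fin.val_one']; exact Nat.mod_eq_of_lt (by omega)

lemma fin_sub_one_eq (n : ℕ) (hn : 1 ≤ n) (i : Fin (n+1)) (hi : 1 ≤ i.val) :
    i - 1 = ((i.val - 1 : ℕ) : Fin (n+1)) := by
  apply Fin.ext
  rw [Fin.sub_def, Fin.val_natCast]
  simp only [fin_one_val n hn]
  have h2 : i.val < n + 1 := i.isLt
  have h3 : (n + 1 - 1 + i.val) = (i.val - 1) + (n+1) := by omega
  rw [h3, Nat.add_mod_right]

lemma fin_cast_inj (n : ℕ) (a b : ℕ) (ha : a ≤ n) (hb : b ≤ n) :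
    ((a : Fin (n+1)) = (b : Fin (n+1))) ↔ a = b := by
  constructor
  · intro h
    have := congrArg Fin.val h
    rwa [Fin.val_cast_of_lt (by omega), Fin.val_cast_of_lt (by omega)] at this
  · rintro rfl; rfl

/- ============ inversion counting ============ -/

noncomputable def invSet (M : ℕ) (x : ℕ → ℝ) : Finset (ℕ × ℕ) :=
  (Finset.range M ×ˢ Finset.range M).filter fun q => q.1 < q.2 ∧ x q.2 < x q.1

lemma mem_invSet {M : ℕ} {x : ℕ → ℝ} {q : ℕ × ℕ} :
    q ∈ invSet M x ↔ q.1 < M ∧ q.2 < M ∧ q.1 < q.2 ∧ x q.2 < x q.1 := by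
  simp [invSet, and_assoc]

lemma invSet_congr {M : ℕ} {x y : ℕ → ℝ} (h : ∀ k < M, x k = y k) :
    invSet M x = invSet M y := by
  ext q
  simp only [mem_invSet]
  constructor <;> rintro ⟨h1, h2, h3, h4⟩ <;> refine ⟨h1, h2, h3, ?_⟩
  · rwa [← h _ h1, ← h _ h2]
  · rwa [h _ h1, h _ h2]

lemma invSet_sub_const {M : ℕ} {x : ℕ → ℝ} {C : ℝ} :
    invSet M (fun k => x k - C) = invSet M x := by
  ext q; simp only [mem_invSet]
  constructor <;> rintro ⟨h1,h2,h3,h4⟩ <;> exact ⟨h1,h2,h3, by linarith⟩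

lemma invSet_prefix {M r : ℕ} {x : ℕ → ℝ} {δ : ℝ} (hδ : 0 ≤ δ) :
    invSet M (fun k => x k - if k < r then δ else 0) ⊆ invSet M x := by
  intro q hq
  simp only [mem_invSet] at hq ⊢
  obtain ⟨h1,h2,h3,h4⟩ := hq
  refine ⟨h1,h2,h3, ?_⟩
  by_cases ha : q.1 < r <;> by_cases hb : q.2 < r <;>
    simp only [ha, hb, if_true, if_false] at h4 <;> simp [ha, hb] at h4 <;> linarith

lemma invSet_card_le (n : ℕ) (x : ℕ → ℝ) :
    (invSet (n+1) x).card ≤ n * (n+1) / 2 := by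
  classical
  have hsub : invSet (n+1) x ⊆ (Finset.range (n+1)).biUnion
      (fun l => (Finset.range l).image fun k => (k, l)) := by
    intro q hq
    rw [mem_invSet] at hq
    simp only [Finset.mem_biUnion, Finset.mem_image, Finset.mem_range]
    exact ⟨q.2, hq.2.1, q.1, hq.2.2.1, by simp⟩
  calc (invSet (n+1) x).card ≤ _ := Finset.card_le_card hsub
    _ ≤ ∑ l ∈ Finset.range (n+1), ((Finset.range l).image fun k => (k, l)).card :=
        Finset.card_biUnion_le
    _ ≤ ∑ l ∈ Finset.range (n+1), l := by
        apply Finset.sum_le_sum; intro l _; exact (Finset.card_image_le).trans (by simp)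
    _ ≤ n * (n+1) / 2 := by
        have h2 : (∑ l ∈ Finset.range (n+1), l) * 2 = n * (n+1) := by
          have := Finset.sum_range_id_mul_two (n+1)
          simpa [Nat.mul_comm] using this
        omega

lemma invSet_swap {M a : ℕ} {x : ℕ → ℝ} (haM : a + 1 < M) (hx : x (a+1) < x a) :
    (invSet M (fun k => if k = a then x (a+1) else if k = a+1 then x a else x k)).card
      < (invSet M x).card := by
  classical
  set σ : ℕ → ℕ := fun k => if k = a then a+1 else if k = a+1 then a else k with hσ
  have hσval : ∀ k, (k = a ∧ σ k = a + 1) ∨ (k = a + 1 ∧ σ k = a) ∨ (k ≠ a ∧ k ≠ a+1 ∧ σ k = k) := by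
    intro k
    by_cases h1 : k = a
    · left; exact ⟨h1, by simp [hσ, h1]⟩
    · by_cases h2 : k = a+1
      · right; left; exact ⟨h2, by simp [hσ, h1, h2]⟩
      · right; right; exact ⟨h1, h2, by simp [hσ, h1, h2]⟩
  have hyx : ∀ k, (if k = a then x (a+1) else if k = a+1 then x a else x k) = x (σ k) := by
    intro k
    by_cases h1 : k = a
    · simp [hσ, h1]
    · by_cases h2 : k = a+1
      · subst h2; simp [hσ, h1]
      · simp [hσ, h1, h2]
  have hmem : (a, a+1) ∈ invSet M x := mem_invSet.2 ⟨by omega, haM, by omega, hx⟩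
  have hcard : (invSet M (fun k => if k = a then x (a+1) else if k = a+1 then x a else x k)).card
      ≤ ((invSet M x).erase (a, a+1)).card := by
    apply Finset.card_le_card_of_injOn (fun q => (σ q.1, σ q.2))
    · intro q hq
      simp only [Finset.mem_coe] at hq ⊢
      simp only [mem_invSet] at hq
      obtain ⟨h1, h2, h3, h4⟩ := hq
      rw [hyx, hyx] at h4
      rw [Finset.mem_erase, mem_invSet]
      rcases hσval q.1 with ⟨e,e'⟩|⟨e,e'⟩|⟨e,f,e'⟩ <;>
        rcases hσval q.2 with ⟨g,g'⟩|⟨g,g'⟩|⟨g,f',g'⟩ <;>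
        refine ⟨?_, ?_, ?_, ?_, h4⟩ <;>
        first
          | omega
          | (intro heq; rw [Prod.mk.injEq] at heq; omega)
          | (rw [e', g'] at h4; linarith)
    · intro q _ r _ h
      simp only [Prod.mk.injEq] at h
      have hinj : ∀ s u : ℕ, σ s = σ u → s = u := by
        intro s u hsu
        rcases hσval s with ⟨e,e'⟩|⟨e,e'⟩|⟨e,f,e'⟩ <;>
          rcases hσval u with ⟨g,g'⟩|⟨g,g'⟩|⟨g,f',g'⟩ <;> omega
      exact Prod.ext (hinj _ _ h.1) (hinj _ _ h.2)
  have := Finset.card_erase_of_mem hmem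
  have hpos : 0 < (invSet M x).card := Finset.card_pos.2 ⟨_, hmem⟩
  omega

/- ============ the square-root inequality ============ -/

lemma sqrt_ratio_le_one (a b e : ℝ) (ha : 0 < a) (hb : 0 < b) (he : 0 < e)
    (hgeo : Real.sqrt (a*e) ≤ b) :
    Real.sqrt (a*b/(a+b)) * (2*e) / (Real.sqrt (b*e/(b+e)) * (b+e)) ≤ 1 := by
  have hs0 : 0 ≤ Real.sqrt (a*e) := Real.sqrt_nonneg _
  set s := Real.sqrt (a*e) with hs
  have hs2 : s^2 = a*e := Real.sq_sqrt (by positivity)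
  have hae : 2*s ≤ a + e := by
    have h1 : s ≤ (a+e)/2 := by
      rw [hs]
      calc Real.sqrt (a*e) ≤ Real.sqrt (((a+e)/2)^2) :=
            Real.sqrt_le_sqrt (by nlinarith [sq_nonneg (a-e)])
        _ = (a+e)/2 := Real.sqrt_sq (by positivity)
    linarith
  have key : 4*(a*e) ≤ (a+b)*(b+e) := by
    nlinarith [mul_nonneg (by linarith : (0:ℝ) ≤ b - s) (by positivity : (0:ℝ) ≤ a+e),
      mul_nonneg (by linarith : (0:ℝ) ≤ a+e-2*s) hs0,
      mul_nonneg (by linarith : (0:ℝ) ≤ b - s) (by linarith : (0:ℝ) ≤ b + s), hs2]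
  have hbe : (0:ℝ) < b*e/(b+e) := by positivity
  rw [div_le_one (by positivity)]
  have lhs_eq : Real.sqrt (a*b/(a+b)) * (2*e) = Real.sqrt (a*b/(a+b) * (2*e)^2) := by
    rw [Real.sqrt_mul (by positivity), Real.sqrt_sq (by positivity)]
  have rhs_eq : Real.sqrt (b*e/(b+e)) * (b+e) = Real.sqrt (b*e/(b+e) * (b+e)^2) := by
    rw [Real.sqrt_mul (le_of_lt hbe), Real.sqrt_sq (by positivity)]
  rw [lhs_eq, rhs_eq]
  apply Real.sqrt_le_sqrt
  rw [div_mul_eq_mul_div, div_mul_eq_mul_div, div_le_div_iff₀ (by positivity) (by positivity)]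
  nlinarith [mul_le_mul_of_nonneg_left key (show (0:ℝ) ≤ b*e*(b+e) by positivity)]

/- ============ scaled relative velocities / partial sums ============ -/

noncomputable def cc (n : ℕ) (m : Fin (n+1) → ℝ) (j : ℕ) : ℝ :=
  Real.sqrt (m ((j - 1 : ℕ) : Fin (n+1)) * m ((j : ℕ) : Fin (n+1)) /
    (m ((j - 1 : ℕ) : Fin (n+1)) + m ((j : ℕ) : Fin (n+1))))

noncomputable def pp (n : ℕ) (m : Fin (n+1) → ℝ) (v : ℕ → Fin (n+1) → ℝ) (t j : ℕ) : ℝ :=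
  cc n m j * (v t ((j - 1 : ℕ) : Fin (n+1)) - v t ((j : ℕ) : Fin (n+1)))

noncomputable def XX (n : ℕ) (m : Fin (n+1) → ℝ) (v : ℕ → Fin (n+1) → ℝ) (t k : ℕ) : ℝ :=
  -∑ j ∈ Finset.Icc 1 k, pp n m v t j

lemma XX_zero (n : ℕ) (m : Fin (n+1) → ℝ) (v : ℕ → Fin (n+1) → ℝ) (t : ℕ) :
    XX n m v t 0 = 0 := by
  simp [XX]

lemma XX_succ (n : ℕ) (m : Fin (n+1) → ℝ) (v : ℕ → Fin (n+1) → ℝ) (t k : ℕ) :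
    XX n m v t (k+1) = XX n m v t k - pp n m v t (k+1) := by
  simp only [XX]
  rw [Finset.sum_Icc_succ_top (by omega : 1 ≤ k+1)]
  ring

/- ============ division helpers ============ -/

lemma collide_diff (b e vA vI : ℝ) (hden : b + e ≠ 0) :
    ((b - e) * vA + 2 * e * vI) / (b + e) - (2 * b * vA + (e - b) * vI) / (b + e) = vI - vA := by
  rw [div_sub_div_same, div_eq_iff hden]; ring

lemma collide_left (b e vA vI : ℝ) (hden : b + e ≠ 0) :
    ((b - e) * vA + 2 * e * vI) / (b + e) = vA + 2 * e * (vI - vA) / (b + e) := by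
  field_simp; ring

lemma collide_right (b e vA vI : ℝ) (hden : b + e ≠ 0) :
    (2 * b * vA + (e - b) * vI) / (b + e) = vI + 2 * b * (vA - vI) / (b + e) := by
  field_simp; ring

lemma coeff_identity (cL cI D e w : ℝ) (hcI : cI ≠ 0) (hD : D ≠ 0) :
    (cL * (2 * e) / (cI * D)) * (cI * w) = cL * (2 * e) * w / D := by
  field_simp

/- ============ the one-step decrease ============ -/

lemma step_dec (n : ℕ) (hn : 1 ≤ n) (m : Fin (n + 1) → ℝ)
    (hm : ∀ i, 0 < m i)
    (hmass : ∀ i : Fin (n + 1), 1 ≤ (i : ℕ) → (i : ℕ) ≤ n - 1 →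
      Real.sqrt (m (i - 1) * m (i + 1)) ≤ m i)
    (v : ℕ → Fin (n + 1) → ℝ) (t : ℕ) (i : Fin (n + 1)) (hi : 1 ≤ (i : ℕ))
    (hlt : v t i < v t (i - 1)) (hcol : v (t + 1) = collide m i (v t)) :
    (invSet (n+1) (XX n m v (t+1))).card < (invSet (n+1) (XX n m v t)).card := by
  classical
  set I := (i : ℕ) with hIdef
  have hIn : I ≤ n := by have := i.isLt; omega
  have hI1 : 1 ≤ I := hi
  -- translate the Fin indices to ℕ indices
  have e1 : i - 1 = ((I - 1 : ℕ) : Fin (n+1)) := fin_sub_one_eq n hn i hi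
  have e2 : i = ((I : ℕ) : Fin (n+1)) := (Fin.cast_val_eq_self i).symm
  -- mass positivity shortcuts
  have hmA : (0:ℝ) < m ((I - 1 : ℕ) : Fin (n+1)) := hm _
  have hmB : (0:ℝ) < m ((I : ℕ) : Fin (n+1)) := hm _
  have hden : m ((I - 1 : ℕ) : Fin (n+1)) + m ((I : ℕ) : Fin (n+1)) ≠ 0 := by positivity
  have hcpos : ∀ j : ℕ, 0 < cc n m j := by
    intro j
    simp only [cc]
    apply Real.sqrt_pos.2
    have := hm ((j - 1 : ℕ) : Fin (n+1)); have := hm ((j : ℕ) : Fin (n+1))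
    positivity
  have hccI : cc n m I ≠ 0 := ne_of_gt (hcpos I)
  -- the velocities after the collision, in ℕ coordinates
  have hu : ∀ k : ℕ, k ≤ n → v (t+1) ((k : ℕ) : Fin (n+1)) =
      if k = I - 1 then
        ((m ((I - 1 : ℕ) : Fin (n+1)) - m ((I : ℕ) : Fin (n+1))) * v t ((I - 1 : ℕ) : Fin (n+1))
          + 2 * m ((I : ℕ) : Fin (n+1)) * v t ((I : ℕ) : Fin (n+1)))
          / (m ((I - 1 : ℕ) : Fin (n+1)) + m ((I : ℕ) : Fin (n+1)))
      else if k = I then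
        (2 * m ((I - 1 : ℕ) : Fin (n+1)) * v t ((I - 1 : ℕ) : Fin (n+1))
          + (m ((I : ℕ) : Fin (n+1)) - m ((I - 1 : ℕ) : Fin (n+1))) * v t ((I : ℕ) : Fin (n+1)))
          / (m ((I - 1 : ℕ) : Fin (n+1)) + m ((I : ℕ) : Fin (n+1)))
      else v t ((k : ℕ) : Fin (n+1)) := by
    intro k hk
    rw [hcol]
    simp only [collide]
    rw [e1, e2]
    simp only [fin_cast_inj n k (I-1) hk (by omega), fin_cast_inj n k I hk (by omega)]
  have hvA : v (t+1) ((I - 1 : ℕ) : Fin (n+1)) =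
      ((m ((I - 1 : ℕ) : Fin (n+1)) - m ((I : ℕ) : Fin (n+1))) * v t ((I - 1 : ℕ) : Fin (n+1))
        + 2 * m ((I : ℕ) : Fin (n+1)) * v t ((I : ℕ) : Fin (n+1)))
        / (m ((I - 1 : ℕ) : Fin (n+1)) + m ((I : ℕ) : Fin (n+1))) := by
    rw [hu (I-1) (by omega), if_pos rfl]
  have hvB : v (t+1) ((I : ℕ) : Fin (n+1)) =
      (2 * m ((I - 1 : ℕ) : Fin (n+1)) * v t ((I - 1 : ℕ) : Fin (n+1))
        + (m ((I : ℕ) : Fin (n+1)) - m ((I - 1 : ℕ) : Fin (n+1))) * v t ((I : ℕ) : Fin (n+1)))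
        / (m ((I - 1 : ℕ) : Fin (n+1)) + m ((I : ℕ) : Fin (n+1))) := by
    rw [hu I hIn, if_neg (by omega : ¬ I = I - 1), if_pos rfl]
  have hvO : ∀ k : ℕ, k ≤ n → k ≠ I - 1 → k ≠ I →
      v (t+1) ((k : ℕ) : Fin (n+1)) = v t ((k : ℕ) : Fin (n+1)) := by
    intro k hk h1 h2
    rw [hu k hk, if_neg h1, if_neg h2]
  -- admissibility in ℕ coordinates
  have hlt' : v t ((I : ℕ) : Fin (n+1)) < v t ((I - 1 : ℕ) : Fin (n+1)) := by
    rw [e1, e2] at hlt; exact hlt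
  have hppIpos : 0 < pp n m v t I := by
    simp only [pp]
    exact mul_pos (hcpos I) (by linarith)
  -- the reflection coefficients
  set θL : ℝ := cc n m (I-1) * (2 * m ((I : ℕ) : Fin (n+1))) /
      (cc n m I * (m ((I - 1 : ℕ) : Fin (n+1)) + m ((I : ℕ) : Fin (n+1)))) with hθLdef
  set θR : ℝ := cc n m (I+1) * (2 * m ((I - 1 : ℕ) : Fin (n+1))) /
      (cc n m I * (m ((I - 1 : ℕ) : Fin (n+1)) + m ((I : ℕ) : Fin (n+1)))) with hθRdef
  -- update rules for pp
  have hppI : pp n m v (t+1) I = - pp n m v t I := by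
    simp only [pp]
    rw [hvA, hvB, collide_diff _ _ _ _ hden]
    ring
  have hppL : 2 ≤ I → pp n m v (t+1) (I-1) = pp n m v t (I-1) + θL * pp n m v t I := by
    intro h2
    simp only [pp]
    rw [hvO (I-1-1) (by omega) (by omega) (by omega), hvA, collide_left _ _ _ _ hden,
      hθLdef, coeff_identity _ _ _ _ _ hccI hden]
    ring
  have hppR : I + 1 ≤ n → pp n m v (t+1) (I+1) = pp n m v t (I+1) + θR * pp n m v t I := by
    intro h2
    simp only [pp]
    rw [show I + 1 - 1 = I from by omega]
    rw [hvB, hvO (I+1) (by omega) (by omega) (by omega), collide_right _ _ _ _ hden,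
      hθRdef, coeff_identity _ _ _ _ _ hccI hden]
    ring
  have hppO : ∀ j : ℕ, 1 ≤ j → j ≤ n → j ≠ I - 1 → j ≠ I → j ≠ I + 1 →
      pp n m v (t+1) j = pp n m v t j := by
    intro j h1 hjn d1 d2 d3
    simp only [pp]
    rw [hvO (j-1) (by omega) (by omega) (by omega), hvO j hjn d1 d2]
  -- bounds on the coefficients
  have hθL0 : 0 ≤ θL := by
    rw [hθLdef]
    have := hcpos (I-1); have := hcpos I
    positivity
  have hθR0 : 0 ≤ θR := by
    rw [hθRdef]
    have := hcpos (I+1); have := hcpos I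
    positivity
  have hθL1 : 2 ≤ I → θL ≤ 1 := by
    intro h2
    have hval : (((I-1 : ℕ) : Fin (n+1)) : ℕ) = I - 1 := Fin.val_cast_of_lt (by omega)
    have hgeo := hmass ((I-1 : ℕ) : Fin (n+1)) (by rw [hval]; omega) (by rw [hval]; omega)
    have es : ((I-1 : ℕ) : Fin (n+1)) - 1 = ((I-1-1 : ℕ) : Fin (n+1)) := by
      rw [fin_sub_one_eq n hn _ (by rw [hval]; omega), hval]
    have ea : ((I-1 : ℕ) : Fin (n+1)) + 1 = ((I : ℕ) : Fin (n+1)) := by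
      have h' : ((I-1+1 : ℕ) : Fin (n+1)) = ((I-1 : ℕ) : Fin (n+1)) + 1 := by push_cast; ring
      rw [← h', show I-1+1 = I from by omega]
    rw [es, ea] at hgeo
    rw [hθLdef]
    simp only [cc]
    exact sqrt_ratio_le_one _ _ _ (hm _) (hm _) (hm _) hgeo
  have hθR1 : I + 1 ≤ n → θR ≤ 1 := by
    intro h2
    have hval : (((I : ℕ) : Fin (n+1)) : ℕ) = I := Fin.val_cast_of_lt (by omega)
    have hgeo := hmass ((I : ℕ) : Fin (n+1)) (by rw [hval]; omega) (by rw [hval]; omega)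
    have es : ((I : ℕ) : Fin (n+1)) - 1 = ((I-1 : ℕ) : Fin (n+1)) := by
      rw [fin_sub_one_eq n hn _ (by rw [hval]; omega), hval]
    have ea : ((I : ℕ) : Fin (n+1)) + 1 = ((I+1 : ℕ) : Fin (n+1)) := by
      push_cast; ring
    rw [es, ea] at hgeo
    rw [hθRdef]
    simp only [cc]
    rw [show I + 1 - 1 = I from by omega]
    rw [mul_comm (m ((I : ℕ) : Fin (n+1))) (m ((I+1 : ℕ) : Fin (n+1))),
        add_comm (m ((I : ℕ) : Fin (n+1))) (m ((I+1 : ℕ) : Fin (n+1))),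
        mul_comm (m ((I-1 : ℕ) : Fin (n+1))) (m ((I : ℕ) : Fin (n+1))),
        add_comm (m ((I-1 : ℕ) : Fin (n+1))) (m ((I : ℕ) : Fin (n+1)))]
    exact sqrt_ratio_le_one _ _ _ (hm _) (hm _) (hm _)
      (by rwa [mul_comm] at hgeo)
  -- the comparison sequence
  set δL : ℝ := if 2 ≤ I then (1 - θL) * pp n m v t I else 0 with hδLdef
  set δR : ℝ := if I + 1 ≤ n then (1 - θR) * pp n m v t I else 0 with hδRdef
  have hδL0 : 0 ≤ δL := by
    rw [hδLdef]; split_ifs with h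
    · exact mul_nonneg (by linarith [hθL1 h]) (le_of_lt hppIpos)
    · exact le_refl 0
  have hδR0 : 0 ≤ δR := by
    rw [hδRdef]; split_ifs with h
    · exact mul_nonneg (by linarith [hθR1 h]) (le_of_lt hppIpos)
    · exact le_refl 0
  have hδLval : 2 ≤ I → δL = (1 - θL) * pp n m v t I := by
    intro h; rw [hδLdef, if_pos h]
  have hδRval : I + 1 ≤ n → δR = (1 - θR) * pp n m v t I := by
    intro h; rw [hδRdef, if_pos h]
  set Y : ℕ → ℝ := fun k => if k = I - 1 then XX n m v t (I-1+1)
      else if k = I-1+1 then XX n m v t (I-1) else XX n m v t k with hY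
  set Z1 : ℕ → ℝ := fun k => Y k - (if k < I-1 then δL else 0) with hZ1
  set Z : ℕ → ℝ := fun k => Z1 k - (if k < I+1 then δR else 0) with hZ2
  -- the difference identity
  have hZdiff : ∀ k : ℕ, k + 1 ≤ n → Z (k+1) - Z k = - pp n m v (t+1) (k+1) := by
    intro k hk
    by_cases hc1 : k + 1 = I - 1
    · have h2 : 2 ≤ I := by omega
      rw [hc1, show k = I-1-1 from by omega, hppL h2]
      have hL := hδLval h2
      have d1 := XX_succ n m v t (I-1-1)
      rw [show I-1-1+1 = I-1 from by omega] at d1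
      have d2 := XX_succ n m v t (I-1)
      rw [show I-1+1 = I from by omega] at d2
      simp only [hZ2, hZ1, hY]
      rw [if_neg (by omega : ¬ (I-1-1 = I-1)), if_neg (by omega : ¬ (I-1-1 = I-1+1)),
          if_neg (by omega : ¬ (I-1 < I-1)), if_pos (by omega : I-1 < I+1),
          if_pos (by omega : I-1-1 < I-1), if_pos (by omega : I-1-1 < I+1)]
      simp only [if_true]
      rw [show I-1+1 = I from by omega]
      linarith
    · by_cases hc2 : k + 1 = I
      · rw [hc2, show k = I-1 from by omega, hppI]
        have d2 := XX_succ n m v t (I-1)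
        rw [show I-1+1 = I from by omega] at d2
        simp only [hZ2, hZ1, hY]
        rw [if_neg (by omega : ¬ (I = I-1)), if_pos (by omega : I = I-1+1),
            if_neg (by omega : ¬ (I < I-1)), if_pos (by omega : I < I+1),
            if_neg (by omega : ¬ (I-1 < I-1)), if_pos (by omega : I-1 < I+1)]
        simp only [if_true]
        rw [show I-1+1 = I from by omega]
        linarith
      · by_cases hc3 : k + 1 = I + 1
        · have h2 : I + 1 ≤ n := by omega
          rw [hc3, show k = I from by omega, hppR h2]
          have hR := hδRval h2
          have d2 := XX_succ n m v t (I-1)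
          rw [show I-1+1 = I from by omega] at d2
          have d3 := XX_succ n m v t I
          simp only [hZ2, hZ1, hY]
          rw [if_neg (by omega : ¬ (I+1 = I-1)), if_neg (by omega : ¬ (I+1 = I-1+1)),
              if_neg (by omega : ¬ (I = I-1)), if_pos (by omega : I = I-1+1),
              if_neg (by omega : ¬ (I+1 < I-1)), if_neg (by omega : ¬ (I+1 < I+1)),
              if_neg (by omega : ¬ (I < I-1)), if_pos (by omega : I < I+1)]
          linarith
        · rw [hppO (k+1) (by omega) hk hc1 hc2 hc3]
          have d := XX_succ n m v t k
          simp only [hZ2, hZ1, hY]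
          rw [if_neg hc1, if_neg (by omega : ¬ (k+1 = I-1+1)),
              if_neg (by omega : ¬ (k = I-1)), if_neg (by omega : ¬ (k = I-1+1))]
          by_cases hb1 : k + 1 < I - 1
          · rw [if_pos hb1, if_pos (by omega : k < I-1),
                if_pos (by omega : k+1 < I+1), if_pos (by omega : k < I+1)]
            linarith
          · by_cases hb2 : k + 1 < I + 1
            · rw [if_neg hb1, if_neg (by omega : ¬ (k < I-1)),
                  if_pos hb2, if_pos (by omega : k < I+1)]
              linarith
            · rw [if_neg hb1, if_neg (by omega : ¬ (k < I-1)),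
                  if_neg hb2, if_neg (by omega : ¬ (k < I+1))]
              linarith
  -- XX (t+1) agrees with Z up to a constant
  have hXZ : ∀ k : ℕ, k ≤ n → XX n m v (t+1) k = Z k - Z 0 := by
    intro k
    induction k with
    | zero => intro _; rw [XX_zero, sub_self]
    | succ k ih =>
        intro hk
        rw [XX_succ, ih (by omega)]
        have := hZdiff k hk
        linarith
  -- final chain
  have c1 : invSet (n+1) (XX n m v (t+1)) = invSet (n+1) (fun k => Z k - Z 0) :=
    invSet_congr (fun k hk => hXZ k (by omega))
  have c2 : invSet (n+1) (fun k => Z k - Z 0) = invSet (n+1) Z := invSet_sub_const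
  have c3 : invSet (n+1) Z ⊆ invSet (n+1) Z1 := by
    rw [hZ2]; exact invSet_prefix hδR0
  have c4 : invSet (n+1) Z1 ⊆ invSet (n+1) Y := by
    rw [hZ1]; exact invSet_prefix hδL0
  have c5 : (invSet (n+1) Y).card < (invSet (n+1) (XX n m v t)).card := by
    rw [hY]
    apply invSet_swap (by omega : I - 1 + 1 < n + 1)
    rw [show I-1+1 = I from by omega]
    have d2 := XX_succ n m v t (I-1)
    rw [show I-1+1 = I from by omega] at d2
    linarith
  rw [c1, c2]
  exact lt_of_le_of_lt (le_trans (Finset.card_le_card c3) (Finset.card_le_card c4)) c5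


/-- If every interior mass is at least the geometric mean of the masses of its
immediate neighbors, then any admissible collision sequence of the `n + 1`
hard balls has length at most `n (n + 1) / 2`. -/
theorem max_collisions_of_geometric_mean_condition
    (n : ℕ) (hn : 1 ≤ n) (m : Fin (n + 1) → ℝ)
    (hm : ∀ i, 0 < m i)
    (hmass : ∀ i : Fin (n + 1), 1 ≤ (i : ℕ) → (i : ℕ) ≤ n - 1 →
      Real.sqrt (m (i - 1) * m (i + 1)) ≤ m i)
    (N : ℕ) (v : ℕ → Fin (n + 1) → ℝ)
    (hstep : ∀ t < N, ∃ i : Fin (n + 1), 1 ≤ (i : ℕ) ∧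
      v t i < v t (i - 1) ∧ v (t + 1) = collide m i (v t)) :
    N ≤ n * (n + 1) / 2 := by
  have key : ∀ t, t < N →
      (invSet (n+1) (XX n m v (t+1))).card < (invSet (n+1) (XX n m v t)).card := by
    intro t ht
    obtain ⟨i, hi, hlt, hcol⟩ := hstep t ht
    exact step_dec n hn m hm hmass v t i hi hlt hcol
  have mono : ∀ t, t ≤ N →
      t + (invSet (n+1) (XX n m v t)).card ≤ (invSet (n+1) (XX n m v 0)).card := by
    intro t
    induction t with
    | zero => intro _; omega
    | succ t ih =>
        intro h
        have h1 := ih (by omega)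
        have h2 := key t (by omega)
        omega
  have h3 := mono N le_rfl
  have h4 := invSet_card_le n (XX n m v 0)
  omega
end

section
/- Let n ≥ 1 and let m_0, m_1, …, m_n be positive real numbers satisfying m_i ≥ (m_{i-1} + m_{i+1})/2 for all i = 1, …, n−1 (the Murphy–Cohen condition). Then every admissible collision sequence has length at most n(n+1)/2; that is, if v^(0), v^(1), …, v^(N) is a sequence of vectors in ℝ^{n+1} such that for each t < N there is an index i (1 ≤ i ≤ n) with v^(t)_{i-1} > v^(t)_i and v^(t+1) is obtained from v^(t) by the elastic collision between balls i−1 and i, then N ≤ n(n+1)/2. -/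
namespace MaxColl

noncomputable def ww (μ : ℕ → ℝ) : ℕ → ℝ
  | 0 => 0
  | 1 => 1
  | (j+2) => ww μ (j+1) * (2 * μ (j+2) / (μ (j+1) + μ (j+2)))

noncomputable def SS (μ : ℕ → ℝ) (v : ℕ → ℝ) (c : ℕ) : ℝ :=
  ∑ j ∈ Finset.Icc 1 c, ww μ j * (v (j-1) - v j)

noncomputable def dlo (μ : ℕ → ℝ) (i : ℕ) : ℝ :=
  ww μ i - 2 * μ i * ww μ (i-1) / (μ (i-1) + μ i)

noncomputable def dhi (μ : ℕ → ℝ) (i : ℕ) : ℝ :=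
  2 * ww μ i - 2 * μ i * ww μ (i-1) / (μ (i-1) + μ i)
    - 2 * μ (i-1) * ww μ (i+1) / (μ (i-1) + μ i)

noncomputable def del (μ : ℕ → ℝ) (i k : ℕ) : ℝ :=
  if k + 2 ≤ i then 0 else if k ≤ i then dlo μ i else dhi μ i

def sw (i k : ℕ) : ℕ := if k = i - 1 then i else if k = i then i - 1 else k

variable {μ : ℕ → ℝ}

lemma ww_pos (hμ : ∀ k, 0 < μ k) : ∀ j, 1 ≤ j → 0 < ww μ j := by
  intro j
  induction j with
  | zero => omega
  | succ j ih =>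
    intro _
    match j with
    | 0 => simp [ww]
    | (j+1) =>
      rw [show j + 1 + 1 = j + 2 from rfl, ww]
      have h1 : 0 < μ (j+1) := hμ _
      have h2 : 0 < μ (j+2) := hμ _
      exact mul_pos (ih (by omega)) (div_pos (by linarith) (by linarith))

lemma ww_rec (hμ : ∀ k, 0 < μ k) (j : ℕ) (h : 1 ≤ j) :
    ww μ (j+1) = ww μ j * (2 * μ (j+1) / (μ j + μ (j+1))) := by
  match j with
  | (j+1) => rfl

lemma SS_succ (v : ℕ → ℝ) (i : ℕ) (h : 1 ≤ i) :
    SS μ v i = SS μ v (i-1) + ww μ i * (v (i-1) - v i) := by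
  obtain ⟨j, rfl⟩ : ∃ j, i = j + 1 := ⟨i - 1, by omega⟩
  rw [SS, SS, Finset.sum_Icc_succ_top (by omega : 1 ≤ j + 1)]
  simp

lemma dlo_nonneg (hμ : ∀ k, 0 < μ k) (i : ℕ) (h1 : 1 ≤ i) : 0 ≤ dlo μ i := by
  match i with
  | 1 => simp [dlo, ww]
  | (j+2) =>
    have h := ww_rec hμ (j+1) (by omega)
    rw [dlo, show j+2-1 = j+1 from rfl, h]
    have h1 : 0 < μ (j+1) := hμ _
    have h2 : 0 < μ (j+2) := hμ _
    have : 0 < μ (j+1) + μ (j+2) := by linarith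
    rw [sub_nonneg]
    apply le_of_eq
    have hne : μ (j+1) + μ (j+2) ≠ 0 := by linarith
    field_simp

lemma dlo_le_dhi (hμ : ∀ k, 0 < μ k) (i : ℕ) (h1 : 1 ≤ i)
    (hm : μ (i-1) + μ (i+1) ≤ 2 * μ i) : dlo μ i ≤ dhi μ i := by
  have ha : 0 < μ (i-1) := hμ _
  have hb : 0 < μ i := hμ _
  have hc : 0 < μ (i+1) := hμ _
  have hM : 0 < μ (i-1) + μ i := by linarith
  have hbc : 0 < μ i + μ (i+1) := by linarith
  have hW : 0 < ww μ i := ww_pos hμ i h1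
  have hkey : 2 * μ (i-1) * ww μ (i+1) / (μ (i-1) + μ i) ≤ ww μ i := by
    rw [ww_rec hμ i h1, div_le_iff₀ hM]
    rw [show 2 * μ (i-1) * (ww μ i * (2 * μ (i+1) / (μ i + μ (i+1))))
        = (4 * μ (i-1) * μ (i+1) * ww μ i) / (μ i + μ (i+1)) by ring]
    rw [div_le_iff₀ hbc]
    nlinarith [mul_nonneg (by linarith : (0:ℝ) ≤ 2 * μ i - (μ (i-1) + μ (i+1)))
        (by linarith : (0:ℝ) ≤ 2 * μ i + 3 * (μ (i-1) + μ (i+1))),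
      sq_nonneg (μ (i-1) - μ (i+1)), hW.le, mul_pos hW hb]
  rw [dlo, dhi]
  linarith


lemma mono_del (hμ : ∀ k, 0 < μ k) (n i : ℕ) (h1 : 1 ≤ i) (h2 : i ≤ n)
    (hm : i + 1 ≤ n → μ (i-1) + μ (i+1) ≤ 2 * μ i)
    {k k' : ℕ} (hkk : k ≤ k') (hk' : k' ≤ n) :
    del μ i k ≤ del μ i k' := by
  have hdl : 0 ≤ dlo μ i := dlo_nonneg hμ i h1
  unfold del
  split_ifs with a b c d e f
  · exact le_refl _
  · exact hdl
  · exact le_trans hdl (dlo_le_dhi hμ i h1 (hm (by omega)))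
  · omega
  · exact le_refl _
  · exact dlo_le_dhi hμ i h1 (hm (by omega))
  · omega
  · omega
  · exact le_refl _

lemma key (hμ : ∀ k, 0 < μ k) (n i : ℕ) (h1 : 1 ≤ i) (h2 : i ≤ n)
    (v v' : ℕ → ℝ)
    (hv' : ∀ k, k ≤ n → v' k =
      if k = i - 1 then ((μ (i-1) - μ i) * v (i-1) + 2 * μ i * v i) / (μ (i-1) + μ i)
      else if k = i then (2 * μ (i-1) * v (i-1) + (μ i - μ (i-1)) * v i) / (μ (i-1) + μ i)
      else v k)
    (k : ℕ) (hk : k ≤ n) :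
    SS μ v' (sw i k) = SS μ v k - del μ i k * (v (i-1) - v i) := by
  have ha : 0 < μ (i-1) := hμ _
  have hb : 0 < μ i := hμ _
  have hM : 0 < μ (i-1) + μ i := by linarith
  have hMne : μ (i-1) + μ i ≠ 0 := ne_of_gt hM
  set d : ℝ := v (i-1) - v i with hd
  have hA : v' (i-1) = v (i-1) - 2 * μ i / (μ (i-1) + μ i) * d := by
    rw [hv' (i-1) (by omega), if_pos rfl, hd]
    field_simp
    ring
  have hB : v' i = v i + 2 * μ (i-1) / (μ (i-1) + μ i) * d := by
    rw [hv' i (by omega), if_neg (by omega), if_pos rfl, hd]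
    field_simp
    ring
  have hC : ∀ j, j ≤ n → j ≠ i - 1 → j ≠ i → v' j = v j := by
    intro j hj hj1 hj2
    rw [hv' j hj, if_neg hj1, if_neg hj2]
  set T1 : ℝ := ww μ (i-1) * (2 * μ i / (μ (i-1) + μ i) * d) with hT1
  set T2 : ℝ := -2 * ww μ i * d with hT2
  set T3 : ℝ := ww μ (i+1) * (2 * μ (i-1) / (μ (i-1) + μ i) * d) with hT3
  have hterm : ∀ j, 1 ≤ j → j ≤ n →
      ww μ j * (v' (j-1) - v' j) = ww μ j * (v (j-1) - v j)
        + ((if j = i-1 then T1 else 0) + (if j = i then T2 else 0)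
            + (if j = i+1 then T3 else 0)) := by
    intro j hj1 hjn
    rcases eq_or_ne j (i-1) with hj | hj
    · have hi2 : 2 ≤ i := by omega
      have e1 : v' (j-1) = v (j-1) := hC (j-1) (by omega) (by omega) (by omega)
      have e2 : v' j = v (i-1) - 2 * μ i / (μ (i-1) + μ i) * d := by rw [hj]; exact hA
      rw [e1, e2, hj, if_pos rfl, if_neg (by omega), if_neg (by omega), hT1]
      ring
    · rcases eq_or_ne j i with hj' | hj'
      · have e1 : v' (j-1) = v (i-1) - 2 * μ i / (μ (i-1) + μ i) * d := by
          rw [hj']; exact hA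
        have e2 : v' j = v i + 2 * μ (i-1) / (μ (i-1) + μ i) * d := by rw [hj']; exact hB
        rw [e1, e2, hj', if_neg (by omega), if_pos rfl, if_neg (by omega), hT2]
        have hdd : v (i-1) - v i = d := hd.symm
        field_simp
        ring
      · rcases eq_or_ne j (i+1) with hj'' | hj''
        · subst hj''
          have e1 : v' (i+1-1) = v i + 2 * μ (i-1) / (μ (i-1) + μ i) * d := by
            rw [show i+1-1 = i from rfl]; exact hB
          have e2 : v' (i+1) = v (i+1) := hC (i+1) hjn (by omega) (by omega)
          rw [e1, e2, if_neg (by omega), if_neg (by omega), if_pos rfl, hT3,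
            show i+1-1 = i from rfl]
          ring
        · have e1 : v' (j-1) = v (j-1) := hC (j-1) (by omega) (by omega) (by omega)
          have e2 : v' j = v j := hC j hjn hj hj'
          rw [e1, e2, if_neg hj, if_neg hj', if_neg hj'']
          ring
  have hdiff : ∀ c, c ≤ n → SS μ v' c = SS μ v c
      + ((if i-1 ∈ Finset.Icc 1 c then T1 else 0)
        + (if i ∈ Finset.Icc 1 c then T2 else 0)
        + (if i+1 ∈ Finset.Icc 1 c then T3 else 0)) := by
    intro c hc
    rw [SS, SS]
    have hcongr : (∑ j ∈ Finset.Icc 1 c, ww μ j * (v' (j-1) - v' j))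
        = ∑ j ∈ Finset.Icc 1 c, (ww μ j * (v (j-1) - v j)
          + ((if j = i-1 then T1 else 0) + (if j = i then T2 else 0)
              + (if j = i+1 then T3 else 0))) := by
      refine Finset.sum_congr rfl (fun j hj => ?_)
      rw [Finset.mem_Icc] at hj
      exact hterm j hj.1 (le_trans hj.2 hc)
    rw [hcongr, Finset.sum_add_distrib, Finset.sum_add_distrib, Finset.sum_add_distrib,
      Finset.sum_ite_eq' _ (i-1) (fun _ => T1), Finset.sum_ite_eq' _ i (fun _ => T2),
      Finset.sum_ite_eq' _ (i+1) (fun _ => T3)]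
  have hw0 : ww μ 0 = 0 := rfl
  have hT1' : ∀ c : ℕ, i - 1 ≤ c → (if i-1 ∈ Finset.Icc 1 c then T1 else 0)
      = ww μ (i-1) * (2 * μ i / (μ (i-1) + μ i) * d) := by
    intro c hcc
    rcases eq_or_ne i 1 with hi1 | hi1
    · subst hi1; simp [hw0, hT1]
    · rw [if_pos (Finset.mem_Icc.mpr ⟨by omega, hcc⟩)]
  rcases le_or_gt (k+2) i with hcase | hcase
  · -- k ≤ i - 2
    have hswk : sw i k = k := by unfold sw; rw [if_neg (by omega), if_neg (by omega)]
    have hdel : del μ i k = 0 := by unfold del; rw [if_pos hcase]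
    rw [hswk, hdel, hdiff k hk,
      if_neg (by simp only [Finset.mem_Icc]; omega),
      if_neg (by simp only [Finset.mem_Icc]; omega),
      if_neg (by simp only [Finset.mem_Icc]; omega)]
    ring
  · rcases eq_or_ne k (i-1) with hki1 | hki1
    · -- k = i - 1, sw = i
      subst hki1
      have hswk : sw i (i-1) = i := by unfold sw; rw [if_pos rfl]
      have hdel : del μ i (i-1) = dlo μ i := by
        unfold del; rw [if_neg (by omega), if_pos (by omega)]
      rw [hswk, hdel, hdiff i h2, hT1' i (by omega),
        if_pos (Finset.mem_Icc.mpr ⟨h1, le_refl i⟩),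
        if_neg (by simp only [Finset.mem_Icc]; omega),
        SS_succ v i h1, dlo, hT2]
      field_simp
      ring
    · rcases eq_or_ne k i with hki | hki
      · -- k = i, sw = i - 1
        subst hki
        have hswk : sw k k = k - 1 := by
          unfold sw; rw [if_neg (by omega), if_pos rfl]
        have hdel : del μ k k = dlo μ k := by
          unfold del; rw [if_neg (by omega), if_pos (le_refl k)]
        rw [hswk, hdel, hdiff (k-1) (by omega), hT1' (k-1) (le_refl _),
          if_neg (by simp only [Finset.mem_Icc]; omega),
          if_neg (by simp only [Finset.mem_Icc]; omega),
          SS_succ v k h1, dlo]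
        field_simp
        ring
      · -- k ≥ i + 1
        have hik : i + 1 ≤ k := by omega
        have hswk : sw i k = k := by unfold sw; rw [if_neg hki1, if_neg hki]
        have hdel : del μ i k = dhi μ i := by
          unfold del; rw [if_neg (by omega), if_neg (by omega)]
        rw [hswk, hdel, hdiff k hk, hT1' k (by omega),
          if_pos (Finset.mem_Icc.mpr ⟨h1, by omega⟩),
          if_pos (Finset.mem_Icc.mpr ⟨by omega, hik⟩),
          dhi, hT2, hT3]
        field_simp
        ring


theorem aux (n : ℕ) (hn : 1 ≤ n) (μ : ℕ → ℝ) (hμ : ∀ k, 0 < μ k)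
    (hmass : ∀ j, 1 ≤ j → j + 1 ≤ n → μ (j-1) + μ (j+1) ≤ 2 * μ j)
    (N : ℕ) (V : ℕ → ℕ → ℝ)
    (hstep : ∀ t, t < N → ∃ i, 1 ≤ i ∧ i ≤ n ∧ V t i < V t (i-1) ∧
      ∀ k, k ≤ n → V (t+1) k =
        if k = i - 1 then ((μ (i-1) - μ i) * V t (i-1) + 2 * μ i * V t i) / (μ (i-1) + μ i)
        else if k = i then (2 * μ (i-1) * V t (i-1) + (μ i - μ (i-1)) * V t i) / (μ (i-1) + μ i)
        else V t k) :
    N ≤ n * (n+1) / 2 := by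
  classical
  have hstep' : ∀ t, ∃ i, 1 ≤ i ∧ i ≤ n ∧ (t < N → (V t i < V t (i-1) ∧
      ∀ k, k ≤ n → V (t+1) k =
        if k = i - 1 then ((μ (i-1) - μ i) * V t (i-1) + 2 * μ i * V t i) / (μ (i-1) + μ i)
        else if k = i then (2 * μ (i-1) * V t (i-1) + (μ i - μ (i-1)) * V t i) / (μ (i-1) + μ i)
        else V t k)) := by
    intro t
    by_cases h : t < N
    · obtain ⟨i, a, b, c, e⟩ := hstep t h
      exact ⟨i, a, b, fun _ => ⟨c, e⟩⟩
    · exact ⟨1, le_refl 1, hn, fun h' => absurd h' h⟩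
  choose I hI1 hI2 hIc using hstep'
  let fi1 : ℕ → Fin (n+1) := fun t => ⟨I t - 1, by have := hI2 t; omega⟩
  let fi : ℕ → Fin (n+1) := fun t => ⟨I t, by have := hI2 t; omega⟩
  let π : ℕ → Equiv.Perm (Fin (n+1)) := fun t =>
    Nat.rec 1 (fun s p => (Equiv.swap (fi1 s) (fi s)) * p) t
  have hπs : ∀ t, π (t+1) = Equiv.swap (fi1 t) (fi t) * π t := fun _ => rfl
  have hswv : ∀ t (x : Fin (n+1)), ((Equiv.swap (fi1 t) (fi t)) x : ℕ) = sw (I t) (x : ℕ) := by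
    intro t x
    have h1 : 1 ≤ I t := hI1 t
    rcases eq_or_ne x (fi1 t) with h | h
    · rw [h, Equiv.swap_apply_left]
      show (I t : ℕ) = sw (I t) (I t - 1)
      unfold sw
      rw [if_pos rfl]
    · rcases eq_or_ne x (fi t) with h' | h'
      · rw [h', Equiv.swap_apply_right]
        show (I t - 1 : ℕ) = sw (I t) (I t)
        unfold sw
        rw [if_neg (by omega), if_pos rfl]
      · rw [Equiv.swap_apply_of_ne_of_ne h h']
        have hx1 : (x : ℕ) ≠ I t - 1 := fun hh => h (Fin.ext hh)
        have hx2 : (x : ℕ) ≠ I t := fun hh => h' (Fin.ext hh)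
        unfold sw
        rw [if_neg hx1, if_neg hx2]
  set InvS : Equiv.Perm (Fin (n+1)) → Finset (Fin (n+1) × Fin (n+1)) :=
    fun p => Finset.univ.filter (fun q => q.1 < q.2 ∧ p q.2 < p q.1) with hInvS
  have main : ∀ t, t ≤ N → (InvS (π t)).card = t ∧
      ∀ a b : Fin (n+1), a < b → π t b < π t a →
        0 < SS μ (V t) ((π t b : ℕ)) - SS μ (V t) ((π t a : ℕ)) := by
    intro t
    induction t with
    | zero =>
      intro _
      constructor
      · show (Finset.univ.filter (fun q : Fin (n+1) × Fin (n+1) => q.1 < q.2 ∧ (1 : Equiv.Perm (Fin (n+1))) q.2 < (1 : Equiv.Perm (Fin (n+1))) q.1)).card = 0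
        rw [Finset.card_eq_zero, Finset.filter_eq_empty_iff]
        rintro q -
        simp only [Equiv.Perm.one_apply]
        rintro ⟨hq1, hq2⟩
        exact absurd (lt_trans hq1 hq2) (lt_irrefl _)
      · intro a b hab hba
        simp only [show π 0 = 1 from rfl, Equiv.Perm.one_apply] at hba
        exact absurd (lt_trans hab hba) (lt_irrefl _)
    | succ t ih =>
      intro htN
      have ht : t < N := by omega
      obtain ⟨hd, hcol⟩ := hIc t ht
      obtain ⟨hcard, hinv⟩ := ih (by omega)
      have h1 : 1 ≤ I t := hI1 t
      have h2 : I t ≤ n := hI2 t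
      have hdpos : 0 < V t (I t - 1) - V t (I t) := by linarith
      have hkey : ∀ x : Fin (n+1), SS μ (V (t+1)) ((π (t+1) x : ℕ))
          = SS μ (V t) ((π t x : ℕ))
            - del μ (I t) ((π t x : ℕ)) * (V t (I t - 1) - V t (I t)) := by
        intro x
        have hco : ((π (t+1)) x : ℕ) = sw (I t) ((π t x : ℕ)) := by
          rw [hπs t]
          exact hswv t (π t x)
        rw [hco]
        exact key hμ n (I t) h1 h2 (V t) (V (t+1)) hcol ((π t x : ℕ)) (by omega)
      set a0 : Fin (n+1) := (π t)⁻¹ (fi1 t) with ha0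
      set b0 : Fin (n+1) := (π t)⁻¹ (fi t) with hb0
      have hπa0 : π t a0 = fi1 t := Equiv.apply_symm_apply _ _
      have hπb0 : π t b0 = fi t := Equiv.apply_symm_apply _ _
      have hfine : fi1 t ≠ fi t := by
        intro hh
        have := congrArg Fin.val hh
        simp only [fi1, fi] at this
        omega
      have hfilt : (fi1 t : ℕ) = I t - 1 := rfl
      have hfit : (fi t : ℕ) = I t := rfl
      have hab0ne : a0 ≠ b0 := by
        intro hh
        exact hfine (by rw [← hπa0, ← hπb0, hh])
      have hwpos : 0 < ww μ (I t) := ww_pos hμ (I t) h1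
      have hSstep : SS μ (V t) (I t)
          = SS μ (V t) (I t - 1) + ww μ (I t) * (V t (I t - 1) - V t (I t)) :=
        SS_succ (V t) (I t) h1
      have ha0b0 : a0 < b0 := by
        rcases lt_trichotomy a0 b0 with h | h | h
        · exact h
        · exact absurd h hab0ne
        · exfalso
          have := hinv b0 a0 h (by
            rw [hπa0, hπb0]
            show fi1 t < fi t
            rw [Fin.lt_def, hfilt, hfit]
            omega)
          rw [hπa0, hπb0, hfilt, hfit] at this
          nlinarith [mul_pos hwpos hdpos]
      have hord : ∀ x y : Fin (n+1), ¬(x = fi1 t ∧ y = fi t) → ¬(x = fi t ∧ y = fi1 t) →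
          (Equiv.swap (fi1 t) (fi t) x < Equiv.swap (fi1 t) (fi t) y ↔ x < y) := by
        intro x y hxy hyx
        have hx1 : ¬((x:ℕ) = I t - 1 ∧ (y:ℕ) = I t) := by
          intro ⟨u1, u2⟩; exact hxy ⟨Fin.ext u1, Fin.ext u2⟩
        have hx2 : ¬((x:ℕ) = I t ∧ (y:ℕ) = I t - 1) := by
          intro ⟨u1, u2⟩; exact hyx ⟨Fin.ext u1, Fin.ext u2⟩
        rw [Fin.lt_def, Fin.lt_def, hswv t x, hswv t y]
        unfold sw
        split_ifs <;> omega
      have hdel1 : del μ (I t) (I t - 1) = dlo μ (I t) := by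
        unfold del; rw [if_neg (by omega), if_pos (by omega)]
      have hdel2 : del μ (I t) (I t) = dlo μ (I t) := by
        unfold del; rw [if_neg (by omega), if_pos (le_refl _)]
      constructor
      · -- cardinality
        have hset : InvS (π (t+1)) = insert (a0, b0) (InvS (π t)) := by
          ext ⟨a, b⟩
          rw [hInvS]
          simp only [Finset.mem_insert, Finset.mem_filter, Finset.mem_univ, true_and,
            hπs t, Equiv.Perm.mul_apply, Prod.mk.injEq]
          constructor
          · rintro ⟨hab, hlt⟩
            by_cases hc1 : a = a0 ∧ b = b0
            · exact Or.inl hc1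
            · refine Or.inr ⟨hab, ?_⟩
              have c1 : ¬(π t b = fi1 t ∧ π t a = fi t) := by
                rintro ⟨u1, u2⟩
                have hbb : b = a0 := by rw [ha0, ← u1, Equiv.Perm.inv_def, Equiv.symm_apply_apply]
                have haa : a = b0 := by rw [hb0, ← u2, Equiv.Perm.inv_def, Equiv.symm_apply_apply]
                rw [hbb, haa] at hab
                exact absurd (lt_trans hab ha0b0) (lt_irrefl _)
              have c2 : ¬(π t b = fi t ∧ π t a = fi1 t) := by
                rintro ⟨u1, u2⟩
                exact hc1 ⟨by rw [ha0, ← u2, Equiv.Perm.inv_def, Equiv.symm_apply_apply],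
                  by rw [hb0, ← u1, Equiv.Perm.inv_def, Equiv.symm_apply_apply]⟩
              exact (hord (π t b) (π t a) c1 c2).mp hlt
          · rintro (⟨rfl, rfl⟩ | ⟨hab, hlt⟩)
            · refine ⟨ha0b0, ?_⟩
              rw [hπa0, hπb0, Equiv.swap_apply_left, Equiv.swap_apply_right,
                Fin.lt_def, hfilt, hfit]
              omega
            · refine ⟨hab, ?_⟩
              have c1 : ¬(π t b = fi1 t ∧ π t a = fi t) := by
                rintro ⟨u1, u2⟩
                have hbb : b = a0 := by rw [ha0, ← u1, Equiv.Perm.inv_def, Equiv.symm_apply_apply]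
                have haa : a = b0 := by rw [hb0, ← u2, Equiv.Perm.inv_def, Equiv.symm_apply_apply]
                rw [hbb, haa] at hab
                exact absurd (lt_trans hab ha0b0) (lt_irrefl _)
              have c2 : ¬(π t b = fi t ∧ π t a = fi1 t) := by
                rintro ⟨u1, u2⟩
                rw [u1, u2] at hlt
                rw [Fin.lt_def, hfilt, hfit] at hlt
                omega
              exact (hord (π t b) (π t a) c1 c2).mpr hlt
        have hnm : (a0, b0) ∉ InvS (π t) := by
          rw [hInvS]
          simp only [Finset.mem_filter, Finset.mem_univ, true_and, not_and]
          intro _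
          rw [hπa0, hπb0, Fin.lt_def, hfilt, hfit, not_lt]
          omega
        rw [hset, Finset.card_insert_of_notMem hnm, hcard]
      · -- invariant
        intro a b hab hba'
        by_cases hc : a = a0 ∧ b = b0
        · obtain ⟨rfl, rfl⟩ := hc
          rw [hkey a0, hkey b0, hπa0, hπb0, hfilt, hfit, hdel1, hdel2]
          nlinarith [mul_pos hwpos hdpos]
        · have hba : π t b < π t a := by
            rw [hπs t] at hba'
            simp only [Equiv.Perm.mul_apply] at hba'
            rw [hord (π t b) (π t a) ?hA ?hB] at hba'
            · exact hba'
            · rintro ⟨u1, u2⟩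
              rw [u1, u2] at hba'
              rw [Equiv.swap_apply_left, Equiv.swap_apply_right, Fin.lt_def,
                hfilt, hfit] at hba'
              omega
            · rintro ⟨u1, u2⟩
              exact hc ⟨by rw [ha0, ← u2, Equiv.Perm.inv_def, Equiv.symm_apply_apply],
                by rw [hb0, ← u1, Equiv.Perm.inv_def, Equiv.symm_apply_apply]⟩
          have h0 := hinv a b hab hba
          rw [hkey a, hkey b]
          have hmono : del μ (I t) ((π t b : ℕ)) ≤ del μ (I t) ((π t a : ℕ)) := by
            refine mono_del hμ n (I t) h1 h2 (fun hin => hmass (I t) h1 hin) ?_ ?_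
            · exact le_of_lt hba
            · omega
          nlinarith [mul_nonneg (sub_nonneg.mpr hmono) hdpos.le]
  obtain ⟨hcard, -⟩ := main N (le_refl N)
  -- count pairs
  set P : Finset (Fin (n+1) × Fin (n+1)) := Finset.univ.filter (fun q => q.1 < q.2) with hP
  have hsub : InvS (π N) ⊆ P := by
    rw [hInvS, hP]
    intro q hq
    simp only [Finset.mem_filter, Finset.mem_univ, true_and] at hq ⊢
    exact hq.1
  have hNP : N ≤ P.card := by
    rw [← hcard]
    exact Finset.card_le_card hsub
  set Q : Finset (Fin (n+1) × Fin (n+1)) := Finset.univ.filter (fun q => q.2 < q.1) with hQ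
  have hPQ : P.card = Q.card := by
    apply Finset.card_bij' (fun q _ => (q.2, q.1)) (fun q _ => (q.2, q.1)) <;>
      simp [hP, hQ]
  have hE : (Finset.univ.filter (fun q : Fin (n+1) × Fin (n+1) => q.1 = q.2)).card = n + 1 := by
    rw [show (Finset.univ.filter (fun q : Fin (n+1) × Fin (n+1) => q.1 = q.2))
        = Finset.univ.image (fun a : Fin (n+1) => (a, a)) by
      ext ⟨a, b⟩
      simp only [Finset.mem_filter, Finset.mem_univ, true_and, Finset.mem_image,
        Prod.mk.injEq]
      constructor
      · rintro rfl; exact ⟨a, ⟨rfl, rfl⟩⟩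
      · rintro ⟨c, rfl, rfl⟩; rfl]
    rw [Finset.card_image_of_injective _ (fun a b hab => (Prod.mk.injEq _ _ _ _).mp hab |>.1)]
    simp
  have h5 : Disjoint Q (Finset.univ.filter (fun q : Fin (n+1) × Fin (n+1) => q.1 = q.2)) := by
    rw [Finset.disjoint_left]
    intro q hq hq'
    rw [hQ] at hq
    simp only [Finset.mem_filter, Finset.mem_univ, true_and] at hq hq'
    exact absurd hq' (ne_of_gt hq)
  have h3 : (Finset.univ.filter (fun q : Fin (n+1) × Fin (n+1) => ¬ q.1 < q.2))
      = Q ∪ (Finset.univ.filter (fun q : Fin (n+1) × Fin (n+1) => q.1 = q.2)) := by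
    rw [hQ, ← Finset.filter_or]
    apply Finset.filter_congr
    intro q _
    constructor
    · intro h
      rcases lt_trichotomy q.1 q.2 with h' | h' | h'
      · exact absurd h' h
      · exact Or.inr h'
      · exact Or.inl h'
    · rintro (h | h)
      · exact not_lt.mpr (le_of_lt h)
      · exact not_lt.mpr (le_of_eq h.symm)
  have h4 := Finset.card_filter_add_card_filter_not
    (s := (Finset.univ : Finset (Fin (n+1) × Fin (n+1)))) (p := fun q => q.1 < q.2)
  rw [h3, Finset.card_union_of_disjoint h5] at h4
  have hcu : (Finset.univ : Finset (Fin (n+1) × Fin (n+1))).card = (n+1) * (n+1) := by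
    rw [Finset.card_univ]
    simp
  have h6 := h4
  rw [hE, hcu, ← hP, ← hPQ] at h6
  have hr : (n+1) * (n+1) = n*(n+1) + (n+1) := by ring
  rw [hr] at h6
  obtain ⟨A, hA⟩ : ∃ A, n * (n+1) = A := ⟨_, rfl⟩
  rw [hA] at h6 ⊢
  omega

end MaxColl

/-- If every interior mass is at least the arithmetic mean of the masses of its
immediate neighbors, then any admissible collision sequence of the `n + 1`
hard balls has length at most `n (n + 1) / 2`. -/
theorem max_collisions_of_arithmetic_mean_condition
    (n : ℕ) (hn : 1 ≤ n) (m : Fin (n + 1) → ℝ)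
    (hm : ∀ i, 0 < m i)
    (hmass : ∀ i : Fin (n + 1), 1 ≤ (i : ℕ) → (i : ℕ) ≤ n - 1 →
      (m (i - 1) + m (i + 1)) / 2 ≤ m i)
    (N : ℕ) (v : ℕ → Fin (n + 1) → ℝ)
    (hstep : ∀ t < N, ∃ i : Fin (n + 1), 1 ≤ (i : ℕ) ∧
      v t i < v t (i - 1) ∧ v (t + 1) = collide m i (v t)) :
    N ≤ n * (n + 1) / 2 := by
  classical
  set μ : ℕ → ℝ := fun k => if h : k < n+1 then m ⟨k, h⟩ else 1 with hμdef
  set V : ℕ → ℕ → ℝ := fun t k => if h : k < n+1 then v t ⟨k, h⟩ else 0 with hVdef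
  have hμval : ∀ (j : Fin (n+1)) (k : ℕ), (j : ℕ) = k → μ k = m j := by
    intro j k h
    subst h
    simp only [hμdef, j.isLt, dif_pos, Fin.eta]
  have hVval : ∀ (s : ℕ) (j : Fin (n+1)) (k : ℕ), (j : ℕ) = k → V s k = v s j := by
    intro s j k h
    subst h
    simp only [hVdef, j.isLt, dif_pos, Fin.eta]
  refine MaxColl.aux n hn μ ?_ ?_ N V ?_
  · -- positivity
    intro k
    by_cases h : k < n+1
    · rw [hμval ⟨k, h⟩ k rfl]; exact hm _
    · simp only [hμdef, dif_neg h]; exact one_pos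
  · -- mass condition
    intro j h1 h2
    have hjlt : j < n + 1 := by omega
    have hj0 : (⟨j, hjlt⟩ : Fin (n+1)) ≠ 0 := by
      intro hh
      have := congrArg Fin.val hh
      simp at this
      omega
    have hlast : (⟨j, hjlt⟩ : Fin (n+1)) < Fin.last n := by
      rw [Fin.lt_def, Fin.val_last]
      show j < n
      omega
    have hsubval : ((⟨j, hjlt⟩ - 1 : Fin (n+1)) : ℕ) = j - 1 := by
      rw [Fin.coe_sub_one, if_neg hj0]
    have haddval : ((⟨j, hjlt⟩ + 1 : Fin (n+1)) : ℕ) = j + 1 := by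
      rw [Fin.val_add_one_of_lt hlast]
    have := hmass ⟨j, hjlt⟩ (by show 1 ≤ j; omega) (by show j ≤ n - 1; omega)
    rw [hμval (⟨j, hjlt⟩ - 1) (j-1) hsubval, hμval (⟨j, hjlt⟩ + 1) (j+1) haddval,
      hμval ⟨j, hjlt⟩ j rfl]
    linarith
  · -- steps
    intro t ht
    obtain ⟨i, h1, hvlt, hcoll⟩ := hstep t ht
    have hin : (i : ℕ) ≤ n := by omega
    have hi0 : i ≠ 0 := by
      intro hh
      rw [hh] at h1
      simp at h1
    have hsubval : ((i - 1 : Fin (n+1)) : ℕ) = (i : ℕ) - 1 := by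
      rw [Fin.coe_sub_one, if_neg hi0]
    refine ⟨(i : ℕ), h1, hin, ?_, ?_⟩
    · rw [hVval t i _ rfl, hVval t (i-1) _ hsubval]
      exact hvlt
    · intro k hk
      have hkf : k < n + 1 := by omega
      rw [hVval (t+1) ⟨k, hkf⟩ k rfl, hcoll]
      show collide m i (v t) ⟨k, hkf⟩ = _
      rw [collide]
      have hc1 : ((⟨k, hkf⟩ : Fin (n+1)) = i - 1) ↔ (k = (i:ℕ) - 1) := by
        rw [Fin.ext_iff, hsubval]
      have hc2 : ((⟨k, hkf⟩ : Fin (n+1)) = i) ↔ (k = (i:ℕ)) := by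
        rw [Fin.ext_iff]
      have eμ1 : μ ((i:ℕ)-1) = m (i-1) := hμval _ _ hsubval
      have eμ2 : μ (i:ℕ) = m i := hμval _ _ rfl
      have eV1 : V t ((i:ℕ)-1) = v t (i-1) := hVval _ _ _ hsubval
      have eV2 : V t (i:ℕ) = v t i := hVval _ _ _ rfl
      rw [eμ1, eμ2, eV1, eV2]
      by_cases hk1 : k = (i:ℕ) - 1
      · rw [if_pos (hc1.mpr hk1), if_pos hk1]
      · rw [if_neg (fun hh => hk1 (hc1.mp hh)), if_neg hk1]
        by_cases hk2 : k = (i:ℕ)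
        · rw [if_pos (hc2.mpr hk2), if_pos hk2]
        · rw [if_neg (fun hh => hk2 (hc2.mp hh)), if_neg hk2]
          exact (hVval t ⟨k, hkf⟩ k rfl).symm
end

section
/- Let n ≥ 1, let k_{ij} (1 ≤ i, j ≤ n) be real weights with k_{ii} = −2, k_{ij} = k_{ji}, and k_{ij} = 0 whenever |i−j| > 1, extended by k_{i0} = k_{i,n+1} = 0. Let p = (p_1,…,p_n) ∈ ℝ^n be a position with potential q = (q_0,…,q_n), suppose 1 ≤ i ≤ n with p_i < 0, and suppose k_{i,i-1} ≤ 1 and k_{i,i+1} ≤ 1. Let p' be the position obtained by firing i and let q' be its potential. Then inv(q') ≤ inv(q) − 1. -/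
/-- The inversion number of the finite sequence `q 0, q 1, …, q n`. -/
noncomputable def invCount (n : ℕ) (q : ℕ → ℝ) : ℕ :=
  ((Finset.range (n + 1) ×ˢ Finset.range (n + 1)).filter
    fun ab => ab.1 < ab.2 ∧ q ab.2 < q ab.1).card

/-- The involution of indices swapping `i-1` and `i`. -/
def fireSwap (i : ℕ) : ℕ → ℕ := fun a =>
  if a = i - 1 then i else if a = i then i - 1 else a

theorem invCount_aux (n : ℕ) (q q' : ℕ → ℝ) (σ : ℕ → ℕ) (x y : ℕ)
    (hσn : ∀ a, a ≤ n → σ a ≤ n)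
    (hinv : ∀ a, σ (σ a) = a)
    (hy : y ≤ n) (hxy : x < y)
    (hσx : σ x = y) (hσy : σ y = x)
    (hqxy : q y < q x)
    (hnot : ¬ q' y < q' x)
    (horder : ∀ a b, a < b → b ≤ n → ¬(a = x ∧ b = y) → σ a < σ b)
    (hkey : ∀ a b, a < b → b ≤ n → q' b < q' a → q (σ b) < q (σ a)) :
    invCount n q' + 1 ≤ invCount n q := by
  unfold invCount
  set S' := (Finset.range (n + 1) ×ˢ Finset.range (n + 1)).filter
    (fun ab => ab.1 < ab.2 ∧ q' ab.2 < q' ab.1) with hS'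
  set S := (Finset.range (n + 1) ×ˢ Finset.range (n + 1)).filter
    (fun ab => ab.1 < ab.2 ∧ q ab.2 < q ab.1) with hS
  have hmem : (x, y) ∈ S := by
    rw [hS]
    simp only [Finset.mem_filter, Finset.mem_product, Finset.mem_range]
    exact ⟨⟨by omega, by omega⟩, hxy, hqxy⟩
  have hmaps : ∀ ab ∈ S', (σ ab.1, σ ab.2) ∈ S.erase (x, y) := by
    intro ab hab
    rw [hS'] at hab
    simp only [Finset.mem_filter, Finset.mem_product, Finset.mem_range] at hab
    obtain ⟨⟨ha1, ha2⟩, hlt, hord⟩ := hab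
    have hbn : ab.2 ≤ n := by omega
    have hne : ¬(ab.1 = x ∧ ab.2 = y) := by
      rintro ⟨e1, e2⟩
      rw [e1, e2] at hord
      exact hnot hord
    have hso : σ ab.1 < σ ab.2 := horder _ _ hlt hbn hne
    have hq : q (σ ab.2) < q (σ ab.1) := hkey _ _ hlt hbn hord
    rw [Finset.mem_erase]
    constructor
    · intro hcon
      have e1 : σ ab.1 = x := congrArg Prod.fst hcon
      have e2 : σ ab.2 = y := congrArg Prod.snd hcon
      have f1 : ab.1 = y := by rw [← hinv ab.1, e1, hσx]
      have f2 : ab.2 = x := by rw [← hinv ab.2, e2, hσy]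
      omega
    · rw [hS]
      simp only [Finset.mem_filter, Finset.mem_product, Finset.mem_range]
      refine ⟨⟨?_, ?_⟩, hso, hq⟩
      · have := hσn ab.1 (by omega); omega
      · have := hσn ab.2 hbn; omega
  have hinj : Set.InjOn (fun ab : ℕ × ℕ => (σ ab.1, σ ab.2)) S' := by
    intro u _ v _ h
    have h1 : σ u.1 = σ v.1 := congrArg Prod.fst h
    have h2 : σ u.2 = σ v.2 := congrArg Prod.snd h
    have e1 : u.1 = v.1 := by rw [← hinv u.1, h1, hinv]
    have e2 : u.2 = v.2 := by rw [← hinv u.2, h2, hinv]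
    exact Prod.ext e1 e2
  have hle : S'.card ≤ (S.erase (x, y)).card :=
    Finset.card_le_card_of_injOn _ hmaps hinj
  have hlt : (S.erase (x, y)).card < S.card := Finset.card_erase_lt_of_mem hmem
  omega

/-- Firing a negative index `i` with `k (i, i-1) ≤ 1` and `k (i, i+1) ≤ 1`
decreases the inversion number of the potential by at least one.
The position is `p 1, …, p n`, its potential `q a = p 1 + ⋯ + p a` (`a = 0, …, n`),
and firing `i` replaces each `p j` by `p j + p i * k i j`. -/
theorem inv_potential_decreases_after_negative_firing
    (n : ℕ) (hn : 1 ≤ n) (k : ℕ → ℕ → ℝ)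
    (hdiag : ∀ i, 1 ≤ i → i ≤ n → k i i = -2)
    (hsym : ∀ i j, 1 ≤ i → i ≤ n → 1 ≤ j → j ≤ n → k i j = k j i)
    (hfar : ∀ i j, 1 ≤ i → i ≤ n → 1 ≤ j → j ≤ n → (i + 1 < j ∨ j + 1 < i) → k i j = 0)
    (hext0 : ∀ i, 1 ≤ i → i ≤ n → k i 0 = 0)
    (hextn : ∀ i, 1 ≤ i → i ≤ n → k i (n + 1) = 0)
    (p : ℕ → ℝ) (i : ℕ) (hi1 : 1 ≤ i) (hi2 : i ≤ n) (hneg : p i < 0)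
    (hk1 : k i (i - 1) ≤ 1) (hk2 : k i (i + 1) ≤ 1)
    (p' : ℕ → ℝ) (hp' : ∀ j, 1 ≤ j → j ≤ n → p' j = p j + p i * k i j) :
    invCount n (fun a => ∑ j ∈ Finset.Icc 1 a, p' j) + 1 ≤
      invCount n (fun a => ∑ j ∈ Finset.Icc 1 a, p j) := by
  set Q : ℕ → ℝ := fun a => ∑ j ∈ Finset.Icc 1 a, p j with hQdef
  set Q' : ℕ → ℝ := fun a => ∑ j ∈ Finset.Icc 1 a, p' j with hQ'def
  -- basic nonlinear facts
  have hc1' : p i ≤ p i * k i (i - 1) := by nlinarith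
  have hc2' : p i ≤ p i * k i (i + 1) := by nlinarith
  -- potential of the new position
  have hQ'eq : ∀ a, a ≤ n → Q' a = Q a + p i * ∑ j ∈ Finset.Icc 1 a, k i j := by
    intro a ha
    rw [hQ'def, hQdef]
    simp only
    rw [Finset.mul_sum, ← Finset.sum_add_distrib]
    apply Finset.sum_congr rfl
    intro j hj
    have hj' := Finset.mem_Icc.mp hj
    exact hp' j hj'.1 (le_trans hj'.2 ha)
  -- sums of the weights
  have hS0 : ∀ a, a + 1 < i → ∑ j ∈ Finset.Icc 1 a, k i j = 0 := by
    intro a ha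
    apply Finset.sum_eq_zero
    intro j hj
    have hj' := Finset.mem_Icc.mp hj
    exact hfar i j hi1 hi2 hj'.1 (by omega) (Or.inr (by omega))
  have hSm1 : ∑ j ∈ Finset.Icc 1 (i - 1), k i j = k i (i - 1) := by
    by_cases h1 : i = 1
    · subst h1
      rw [show (1 : ℕ) - 1 = 0 from rfl]
      rw [show Finset.Icc 1 0 = (∅ : Finset ℕ) from by simp]
      rw [Finset.sum_empty, hext0 1 le_rfl hn]
    · have h := Finset.sum_Icc_succ_top (a := 1) (b := i - 2) (by omega) (k i)
      rw [show i - 2 + 1 = i - 1 from by omega] at h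
      rw [h, hS0 (i - 2) (by omega)]
      ring
  have hSi : ∑ j ∈ Finset.Icc 1 i, k i j = k i (i - 1) - 2 := by
    have h := Finset.sum_Icc_succ_top (a := 1) (b := i - 1) (by omega) (k i)
    rw [show i - 1 + 1 = i from by omega] at h
    rw [h, hSm1, hdiag i hi1 hi2]
    ring
  have hShigh : ∀ a, i + 1 ≤ a → a ≤ n →
      ∑ j ∈ Finset.Icc 1 a, k i j = k i (i - 1) + k i (i + 1) - 2 := by
    intro a ha
    induction a, ha using Nat.le_induction with
    | base =>
      intro _
      have h := Finset.sum_Icc_succ_top (a := 1) (b := i) (by omega) (k i)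
      rw [h, hSi]
      ring
    | succ a ha ih =>
      intro han
      have h := Finset.sum_Icc_succ_top (a := 1) (b := a) (by omega) (k i)
      rw [h, ih (by omega), hfar i (a + 1) hi1 hi2 (by omega) han (Or.inl (by omega))]
      ring
  -- values of the new potential
  have hstep : Q i = Q (i - 1) + p i := by
    rw [hQdef]
    simp only
    have h := Finset.sum_Icc_succ_top (a := 1) (b := i - 1) (by omega) p
    rw [show i - 1 + 1 = i from by omega] at h
    exact h
  have hv_low : ∀ a, a + 1 < i → Q' a = Q a := by
    intro a ha
    rw [hQ'eq a (by omega), hS0 a ha]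
    ring
  have hv_m1 : Q' (i - 1) = Q (i - 1) + p i * k i (i - 1) := by
    rw [hQ'eq (i - 1) (by omega), hSm1]
  have hv_i : Q' i = Q i + p i * k i (i - 1) - 2 * p i := by
    rw [hQ'eq i hi2, hSi]
    ring
  have hv_high : ∀ a, i + 1 ≤ a → a ≤ n →
      Q' a = Q a + p i * k i (i - 1) + p i * k i (i + 1) - 2 * p i := by
    intro a ha han
    rw [hQ'eq a han, hShigh a ha han]
    ring
  -- properties of the swap
  have hσn : ∀ a, a ≤ n → fireSwap i a ≤ n := by
    intro a ha
    unfold fireSwap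
    split_ifs <;> omega
  have hinvol : ∀ a, fireSwap i (fireSwap i a) = a := by
    intro a
    unfold fireSwap
    split_ifs <;> omega
  have hσx : fireSwap i (i - 1) = i := by
    unfold fireSwap
    simp
  have hσy : fireSwap i i = i - 1 := by
    unfold fireSwap
    rw [if_neg (by omega), if_pos rfl]
  have horder : ∀ a b, a < b → b ≤ n → ¬(a = i - 1 ∧ b = i) →
      fireSwap i a < fireSwap i b := by
    intro a b hab hbn hne
    unfold fireSwap
    split_ifs <;> omega
  have hnot : ¬ Q' i < Q' (i - 1) := by
    intro h
    rw [hv_i, hv_m1, hstep] at h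
    linarith
  have hqxy : Q i < Q (i - 1) := by
    rw [hstep]; linarith
  -- the key comparison
  have hkey : ∀ a b, a < b → b ≤ n → Q' b < Q' a →
      Q (fireSwap i b) < Q (fireSwap i a) := by
    intro a b hab hbn h'
    have hother : ∀ c, c ≠ i - 1 → c ≠ i → fireSwap i c = c := by
      intro c h1 h2
      unfold fireSwap
      rw [if_neg h1, if_neg h2]
    rcases lt_trichotomy b i with hb | hb | hb
    · -- b < i
      by_cases hbm : b = i - 1
      · have hva : Q' a = Q a := hv_low a (by omega)
        have hvb : Q' b = Q (i - 1) + p i * k i (i - 1) := by rw [hbm, hv_m1]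
        rw [hother a (by omega) (by omega), hbm, hσx]
        -- goal : Q i < Q a
        rw [hstep]
        linarith
      · have hva : Q' a = Q a := hv_low a (by omega)
        have hvb : Q' b = Q b := hv_low b (by omega)
        rw [hother a (by omega) (by omega), hother b hbm (by omega)]
        linarith
    · -- b = i
      subst b
      by_cases ham : a = i - 1
      · exfalso
        rw [ham] at h'
        exact hnot h'
      · have hva : Q' a = Q a := hv_low a (by omega)
        rw [hother a ham (by omega), hσy]
        -- goal : Q (i-1) < Q a
        rw [hstep] at hv_i
        linarith [hv_i]
    · -- i < b
      have hvb : Q' b = Q b + p i * k i (i - 1) + p i * k i (i + 1) - 2 * p i :=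
        hv_high b hb hbn
      rw [hother b (by omega) (by omega)]
      rcases lt_trichotomy a i with ha | ha | ha
      · by_cases ham : a = i - 1
        · rw [ham, hσx]
          rw [ham] at h'
          -- goal : Q b < Q i
          rw [hstep]
          linarith [hv_m1]
        · rw [hother a ham (by omega)]
          have hva : Q' a = Q a := hv_low a (by omega)
          linarith
      · subst a
        rw [hσy]
        -- goal : Q b < Q (i-1)
        rw [hstep] at hv_i
        linarith [hv_i]
      · rw [hother a (by omega) (by omega)]
        have hva : Q' a = Q a + p i * k i (i - 1) + p i * k i (i + 1) - 2 * p i :=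
          hv_high a ha (by omega)
        linarith
  exact invCount_aux n Q Q' (fireSwap i) (i - 1) i hσn hinvol hi2 (by omega) hσx hσy hqxy hnot horder hkey
end

section
/- Let n ≥ 1, let k_{ij} (1 ≤ i,j ≤ n) be real weights extended by k_{i0} = k_{i,n+1} = 0, let p = (p_1,…,p_n) ∈ ℝ^n be a position with potential q = (q_0,…,q_n), and let 1 ≤ i ≤ n. If p' is the position obtained by firing i and q' = (q'_0,…,q'_n) is its potential, then: q'_j = q_j for j ≤ i−2; q'_{i-1} = q_i − p_i(1 − k_{i,i-1}); q'_i = q_{i-1} − p_i(1 − k_{i,i-1}) (when k_{ii} = −2); and q'_j = q_j − p_i(1 − k_{i,i-1} + 1 − k_{i,i+1}) for j ≥ i+1. -/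
/-- Explicit formulas for the potential `q' a = p' 1 + ⋯ + p' a` of the position
obtained by firing index `i` (replacing each `p j` by `p j + p i * k i j`),
in terms of the potential `q a = p 1 + ⋯ + p a` of the original position,
where `k i i = -2`, `k i j = 0` for `|i - j| > 1`, and `k i 0 = k i (n+1) = 0`. -/
theorem potential_after_firing
    (n : ℕ) (hn : 1 ≤ n) (k : ℕ → ℕ → ℝ) (p : ℕ → ℝ)
    (i : ℕ) (hi1 : 1 ≤ i) (hi2 : i ≤ n)
    (hdiag : k i i = -2)
    (hfar : ∀ j, 1 ≤ j → j ≤ n → (i + 1 < j ∨ j + 1 < i) → k i j = 0)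
    (hext0 : k i 0 = 0) (hextn : k i (n + 1) = 0) :
    (∀ j, j + 2 ≤ i →
        ∑ l ∈ Finset.Icc 1 j, (p l + p i * k i l) = ∑ l ∈ Finset.Icc 1 j, p l) ∧
    (∑ l ∈ Finset.Icc 1 (i - 1), (p l + p i * k i l) =
        (∑ l ∈ Finset.Icc 1 i, p l) - p i * (1 - k i (i - 1))) ∧
    (∑ l ∈ Finset.Icc 1 i, (p l + p i * k i l) =
        (∑ l ∈ Finset.Icc 1 (i - 1), p l) - p i * (1 - k i (i - 1))) ∧
    (∀ j, i + 1 ≤ j → j ≤ n →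
        ∑ l ∈ Finset.Icc 1 j, (p l + p i * k i l) =
          (∑ l ∈ Finset.Icc 1 j, p l) - p i * (1 - k i (i - 1) + (1 - k i (i + 1)))) := by
  have hsplit : ∀ j, ∑ l ∈ Finset.Icc 1 j, (p l + p i * k i l)
      = (∑ l ∈ Finset.Icc 1 j, p l) + p i * (∑ l ∈ Finset.Icc 1 j, k i l) := by
    intro j
    rw [Finset.sum_add_distrib, Finset.mul_sum]
  have hA : ∀ j, j + 2 ≤ i → (∑ l ∈ Finset.Icc 1 j, k i l) = 0 := by
    intro j hj
    apply Finset.sum_eq_zero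
    intro l hl
    simp only [Finset.mem_Icc] at hl
    exact hfar l hl.1 (by omega) (Or.inr (by omega))
  have hB : (∑ l ∈ Finset.Icc 1 (i - 1), k i l) = k i (i - 1) := by
    rcases Nat.lt_or_ge i 2 with h1 | h1
    · have : i = 1 := by omega
      subst this
      simpa using hext0.symm
    · obtain ⟨m, rfl⟩ : ∃ m, i = m + 2 := ⟨i - 2, by omega⟩
      have e : m + 2 - 1 = m + 1 := by omega
      rw [e, Finset.sum_Icc_succ_top (by omega), hA m (by omega), zero_add]
  have hC : (∑ l ∈ Finset.Icc 1 i, k i l) = k i (i - 1) + k i i := by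
    obtain ⟨m, rfl⟩ : ∃ m, i = m + 1 := ⟨i - 1, by omega⟩
    have e : m + 1 - 1 = m := by omega
    rw [e] at hB ⊢
    rw [Finset.sum_Icc_succ_top (by omega), hB]
  have hD : ∀ j, i + 1 ≤ j → j ≤ n →
      (∑ l ∈ Finset.Icc 1 j, k i l) = k i (i - 1) + k i i + k i (i + 1) := by
    intro j hj1 hj2
    induction j with
    | zero => omega
    | succ m ih =>
      rcases Nat.lt_or_ge m (i + 1) with hm | hm
      · have : m + 1 = i + 1 := by omega
        rw [this, Finset.sum_Icc_succ_top (by omega : 1 ≤ i + 1), hC]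
      · rw [Finset.sum_Icc_succ_top (by omega : 1 ≤ m + 1),
          hfar (m + 1) (by omega) (by omega) (Or.inl (by omega)), add_zero,
          ih hm (by omega)]
  have hq : (∑ l ∈ Finset.Icc 1 i, p l) = (∑ l ∈ Finset.Icc 1 (i - 1), p l) + p i := by
    obtain ⟨m, rfl⟩ : ∃ m, i = m + 1 := ⟨i - 1, by omega⟩
    rw [Finset.sum_Icc_succ_top (by omega)]
    norm_num
  refine ⟨?_, ?_, ?_, ?_⟩
  · intro j hj
    rw [hsplit, hA j hj, mul_zero, add_zero]
  · rw [hsplit, hB, hq]; ring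
  · rw [hsplit, hC, hq, hdiag]; ring
  · intro j hj1 hj2
    rw [hsplit, hD j hj1 hj2, hdiag]; ring
end

section
/- Let n ≥ 1, m_0, …, m_n be positive reals, v_0, …, v_n ∈ ℝ, and 1 ≤ i ≤ n. Let (v'_0,…,v'_n) be obtained from (v_0,…,v_n) by the elastic collision between balls i−1 and i. Then the reflection σ_i realizes the collision: σ_i(Σ_{j=0}^n √(m_j) v_j 1_j) = Σ_{j=0}^n √(m_j) v'_j 1_j. -/
open scoped RealInnerProductSpace

/-- The (unnormalized) vector `1_i / √(m i) - 1_{i-1} / √(m (i-1))`. -/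
noncomputable def uvec {n : ℕ} (m : Fin (n + 1) → ℝ) (i : Fin (n + 1)) :
    EuclideanSpace ℝ (Fin (n + 1)) :=
  EuclideanSpace.single i (Real.sqrt (m i))⁻¹ -
    EuclideanSpace.single (i - 1) (Real.sqrt (m (i - 1)))⁻¹

/-- The unit vector `α i` obtained by normalizing `1_i / √(m i) - 1_{i-1} / √(m (i-1))`. -/
noncomputable def alpha {n : ℕ} (m : Fin (n + 1) → ℝ) (i : Fin (n + 1)) :
    EuclideanSpace ℝ (Fin (n + 1)) :=
  ‖uvec m i‖⁻¹ • uvec m i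

/-- The orthogonal reflection with unit normal `a`: `σ(β) = β - 2 (a, β) a`. -/
noncomputable def reflectIn {n : ℕ} (a β : EuclideanSpace ℝ (Fin (n + 1))) :
    EuclideanSpace ℝ (Fin (n + 1)) :=
  β - (2 * ⟪a, β⟫) • a

/-- The velocity vector `𝐯 = Σ_j √(m j) v j 1_j`. -/
noncomputable def vvec {n : ℕ} (m v : Fin (n + 1) → ℝ) :
    EuclideanSpace ℝ (Fin (n + 1)) :=
  ∑ j : Fin (n + 1), EuclideanSpace.single j (Real.sqrt (m j) * v j)

/-- The reflection `σ i` realizes the elastic collision between balls `i - 1` and `i`: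
`σ i (Σ_j √(m j) v j 1_j) = Σ_j √(m j) v' j 1_j`. -/
theorem reflection_realizes_collision
    (n : ℕ) (hn : 1 ≤ n) (m : Fin (n + 1) → ℝ) (hm : ∀ i, 0 < m i)
    (v : Fin (n + 1) → ℝ) (i : Fin (n + 1)) (hi : 1 ≤ (i : ℕ)) :
    reflectIn (alpha m i) (vvec m v) = vvec m (collide m i v) := by
  have hne : i - 1 ≠ i := by
    rw [Ne, sub_eq_self, Fin.ext_iff, Fin.val_one', Fin.val_zero,
      Nat.mod_eq_of_lt (by omega)]
    omega
  have hs : ∀ j, (Real.sqrt (m j))⁻¹ * (Real.sqrt (m j))⁻¹ = (m j)⁻¹ := fun j => by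
    rw [← mul_inv, Real.mul_self_sqrt (hm j).le]
  have hsne : ∀ j, Real.sqrt (m j) ≠ 0 := fun j => Real.sqrt_ne_zero'.2 (hm j)
  have hv : ∀ (w : Fin (n + 1) → ℝ) (j : Fin (n + 1)),
      vvec m w j = Real.sqrt (m j) * w j := by
    intro w j
    unfold vvec
    rw [show ((∑ k : Fin (n + 1), EuclideanSpace.single k (Real.sqrt (m k) * w k)) j)
        = ∑ k : Fin (n + 1),
            (EuclideanSpace.single k (Real.sqrt (m k) * w k) :
              EuclideanSpace ℝ (Fin (n + 1))) j from by rw [WithLp.ofLp_sum, Finset.sum_apply]]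
    simp [EuclideanSpace.single_apply]
  have huu : ⟪uvec m i, uvec m i⟫ = (m i)⁻¹ + (m (i - 1))⁻¹ := by
    unfold uvec
    rw [inner_sub_left, inner_sub_right, inner_sub_right]
    simp only [EuclideanSpace.inner_single_left, EuclideanSpace.single_apply,
      RCLike.star_def, conj_trivial, if_neg hne, if_neg (Ne.symm hne), if_pos rfl,
      mul_zero, sub_zero, zero_sub, if_true]
    rw [hs, hs]
    ring
  have huv : ⟪uvec m i, vvec m v⟫ = v i - v (i - 1) := by
    unfold uvec
    rw [inner_sub_left]
    simp only [EuclideanSpace.inner_single_left, RCLike.star_def, conj_trivial,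
      hv]
    rw [← mul_assoc, ← mul_assoc, inv_mul_cancel₀ (hsne i),
      inv_mul_cancel₀ (hsne _), one_mul, one_mul]
  have hnorm : ‖uvec m i‖⁻¹ * ‖uvec m i‖⁻¹ = ((m i)⁻¹ + (m (i - 1))⁻¹)⁻¹ := by
    rw [← mul_inv, ← real_inner_self_eq_norm_mul_norm, huu]
  have key : reflectIn (alpha m i) (vvec m v) = vvec m v -
      (2 * ((m i)⁻¹ + (m (i - 1))⁻¹)⁻¹ * (v i - v (i - 1))) • uvec m i := by
    unfold reflectIn alpha
    rw [real_inner_smul_left, huv, smul_smul]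
    congr 1
    rw [← hnorm]
    ring
  rw [key]
  ext j
  rw [PiLp.sub_apply, PiLp.smul_apply, hv, hv]
  unfold uvec collide
  rw [PiLp.sub_apply]
  simp only [EuclideanSpace.single_apply, smul_eq_mul]
  have hm1 := (hm (i - 1)).ne'
  have hm2 := (hm i).ne'
  have hsum : m (i - 1) + m i ≠ 0 := (add_pos (hm _) (hm i)).ne'
  have hs1 := hsne (i - 1)
  have hs2 := hsne i
  have hq1 := Real.mul_self_sqrt (hm (i - 1)).le
  have hq2 := Real.mul_self_sqrt (hm i).le
  rcases eq_or_ne j (i - 1) with h | h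
  · simp only [h, if_neg hne, if_pos rfl, if_true]
    field_simp
    linear_combination ((v (i - 1) * (m (i - 1) + m i) -
      ((m (i - 1) - m i) * v (i - 1) + 2 * m i * v i)) * (m (i - 1) + m i) + 2 * m i * (v (i - 1) - v i) * (1 - m (i - 1) - m i)) * hq1
  · rcases eq_or_ne j i with h' | h'
    · simp only [h', if_pos rfl, if_neg (Ne.symm hne), if_true]
      field_simp
      linear_combination ((v i * (m (i - 1) + m i) -
        (2 * m (i - 1) * v (i - 1) + (m i - m (i - 1)) * v i)) * (m (i - 1) + m i) + 2 * m (i - 1) * (v i - v (i - 1)) * (1 - m (i - 1) - m i)) * hq2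
    · rw [if_neg h', if_neg h, if_neg h, if_neg h']
      ring
end
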